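/- Under MAR and the positivity condition P(M = 0 | X = x) > 0 for P_X-almost every x (where 0 denotes the fully-observed pattern), the true distribution P_X is the unique minimizer over probability distributions Q of the objective E_{M}[KL(P_{X|M}^{(M)} ‖ Q^{(M)})], and the minimum value satisfies: the Q-dependent part Σ_m ∫ log(π^{(m)}/q^{(m)}) π^{(m)} P(M=m | x^{(m)}) dx^{(m)} is ≥ 0 with equality iff Q = P_X. -/

import Mathlib

open MeasureTheory

/-- Marginal density of the observed subvector `x^{(S)}` (coordinates in `S`) obtained by
integrating out the unobserved coordinates. -/
noncomputable def marg {d : ℕ} (f : (Fin d → ℝ) → ℝ) (S : Finset (Fin d))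
    (y : {j : Fin d // j ∈ S} → ℝ) : ℝ :=
  ∫ z : {j : Fin d // j ∉ S} → ℝ, f (fun j => if h : j ∈ S then y ⟨j, h⟩ else z ⟨j, h⟩)

/-- `P(M = S) = ∫ π^{(S)}(y) P(M = S | y) dy`, the probability of observing exactly the
coordinates in `S`, where the weight `w S` gives `P(M = S | x^{(S)})` (MAR). -/
noncomputable def patternProb {d : ℕ} (π : (Fin d → ℝ) → ℝ)
    (w : (S : Finset (Fin d)) → ({j : Fin d // j ∈ S} → ℝ) → ℝ) (S : Finset (Fin d)) : ℝ :=
  ∫ y : {j : Fin d // j ∈ S} → ℝ, marg π S y * w S y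

/-- The expected KL objective `E_M[KL(P_{X|M}^{(M)} ‖ Q^{(M)})]`, written via the Bayes
identity `π_S^{(S)} = π^{(S)} w_S / P(M=S)` valid under MAR. -/
noncomputable def objective {d : ℕ} (𝓜 : Finset (Finset (Fin d)))
    (π : (Fin d → ℝ) → ℝ)
    (w : (S : Finset (Fin d)) → ({j : Fin d // j ∈ S} → ℝ) → ℝ)
    (q : (Fin d → ℝ) → ℝ) : ℝ :=
  ∑ S ∈ 𝓜, patternProb π w S *
    ∫ y : {j : Fin d // j ∈ S} → ℝ,
      Real.log ((marg π S y * w S y / patternProb π w S) / marg q S y) *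
        (marg π S y * w S y / patternProb π w S)

/-- The `q`-dependent part of the objective,
`Σ_m ∫ log(π^{(m)}/q^{(m)}) π^{(m)} P(M=m|x^{(m)}) dx^{(m)}`. -/
noncomputable def qPart {d : ℕ} (𝓜 : Finset (Finset (Fin d)))
    (π : (Fin d → ℝ) → ℝ)
    (w : (S : Finset (Fin d)) → ({j : Fin d // j ∈ S} → ℝ) → ℝ)
    (q : (Fin d → ℝ) → ℝ) : ℝ :=
  ∑ S ∈ 𝓜, ∫ y : {j : Fin d // j ∈ S} → ℝ,
    Real.log (marg π S y / marg q S y) * marg π S y * w S y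

section helpers

variable {d : ℕ}

noncomputable def margEqv (S : Finset (Fin d)) :
    (Fin d → ℝ) ≃ᵐ (({j : Fin d // j ∈ S} → ℝ) × ({j : Fin d // j ∉ S} → ℝ)) :=
  MeasurableEquiv.piEquivPiSubtypeProd (fun _ : Fin d => ℝ) (fun j => j ∈ S)

lemma margEqv_mp (S : Finset (Fin d)) :
    MeasurePreserving (margEqv S) volume volume := by
  refine ⟨(margEqv S).measurable, ?_⟩
  have h := (volume_preserving_piEquivPiSubtypeProd (fun _ : Fin d => ℝ)
    (fun j => j ∈ S)).map_eq
  unfold margEqv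
  rw [h]
  congr!

lemma margEqv_mp_symm (S : Finset (Fin d)) :
    MeasurePreserving (margEqv S).symm volume volume :=
  MeasurePreserving.symm _ (margEqv_mp S)

lemma margEqv_symm_apply (S : Finset (Fin d))
    (y : {j : Fin d // j ∈ S} → ℝ) (z : {j : Fin d // j ∉ S} → ℝ) (j : Fin d) :
    (margEqv S).symm (y, z) j = if h : j ∈ S then y ⟨j, h⟩ else z ⟨j, h⟩ := rfl

lemma margEqv_symm_fst (S : Finset (Fin d))
    (p : ({j : Fin d // j ∈ S} → ℝ) × ({j : Fin d // j ∉ S} → ℝ)) :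
    (fun j : {j : Fin d // j ∈ S} => (margEqv S).symm p j.1) = p.1 := by
  funext j
  have := margEqv_symm_apply S p.1 p.2 j.1
  simp only [j.2, dif_pos] at this
  simpa using this

lemma marg_eq (f : (Fin d → ℝ) → ℝ) (S : Finset (Fin d)) (y : {j : Fin d // j ∈ S} → ℝ) :
    marg f S y = ∫ z, f ((margEqv S).symm (y, z)) := rfl

lemma marg_nonneg {f : (Fin d → ℝ) → ℝ} (hf : ∀ x, 0 ≤ f x) (S : Finset (Fin d))
    (y : {j : Fin d // j ∈ S} → ℝ) : 0 ≤ marg f S y :=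
  integral_nonneg fun _ => hf _

lemma comp_symm_integrable {f : (Fin d → ℝ) → ℝ} (hf : Integrable f) (S : Finset (Fin d)) :
    Integrable (fun p : ({j : Fin d // j ∈ S} → ℝ) × ({j : Fin d // j ∉ S} → ℝ) =>
      f ((margEqv S).symm p)) :=
  ((margEqv_mp_symm S).integrable_comp_emb (margEqv S).symm.measurableEmbedding).mpr hf

lemma marg_pos_ae {f : (Fin d → ℝ) → ℝ} (hfpos : ∀ x, 0 < f x) (hfi : Integrable f)
    (S : Finset (Fin d)) : ∀ᵐ y : {j : Fin d // j ∈ S} → ℝ, 0 < marg f S y := by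
  have hFi := comp_symm_integrable hfi S
  rw [Measure.volume_eq_prod] at hFi
  filter_upwards [hFi.prod_right_ae] with y hy
  rw [marg_eq, integral_pos_iff_support_of_nonneg (fun z => (hfpos _).le) hy]
  have hsupp : Function.support (fun z : {j : Fin d // j ∉ S} → ℝ =>
      f ((margEqv S).symm (y, z))) = Set.univ :=
    Set.eq_univ_iff_forall.mpr fun z => (hfpos _).ne'
  rw [hsupp]
  exact isOpen_univ.measure_pos volume Set.univ_nonempty

lemma marg_mul_w {f : (Fin d → ℝ) → ℝ} (hfm : Measurable f) (hfpos : ∀ x, 0 < f x)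
    (hfi : Integrable f) (S : Finset (Fin d)) {g : ({j : Fin d // j ∈ S} → ℝ) → ℝ}
    (hgm : Measurable g) (hg0 : ∀ y, 0 ≤ g y) (hg1 : ∀ y, g y ≤ 1) :
    Integrable (fun y => marg f S y * g y) ∧
      ∫ y, marg f S y * g y = ∫ x, f x * g (fun j => x j.1) := by
  have hHm : Measurable fun x : Fin d → ℝ => f x * g (fun j : {j : Fin d // j ∈ S} => x j.1) :=
    hfm.mul (hgm.comp (measurable_pi_lambda _ fun j => measurable_pi_apply _))
  have hHi : Integrable fun x : Fin d → ℝ => f x * g (fun j : {j : Fin d // j ∈ S} => x j.1) := by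
    refine hfi.mono' hHm.aestronglyMeasurable (Filter.Eventually.of_forall fun x => ?_)
    rw [Real.norm_eq_abs, abs_of_nonneg (mul_nonneg (hfpos x).le (hg0 _))]
    exact mul_le_of_le_one_right (hfpos x).le (hg1 _)
  have hFi : Integrable (fun p : ({j : Fin d // j ∈ S} → ℝ) × ({j : Fin d // j ∉ S} → ℝ) =>
      f ((margEqv S).symm p) * g p.1) := by
    have h1 : Integrable (fun p : ({j : Fin d // j ∈ S} → ℝ) × ({j : Fin d // j ∉ S} → ℝ) =>
        f ((margEqv S).symm p) * g (fun j : {j : Fin d // j ∈ S} => (margEqv S).symm p j.1)) :=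
      ((margEqv_mp_symm S).integrable_comp_emb (margEqv S).symm.measurableEmbedding).mpr hHi
    exact h1.congr (Filter.Eventually.of_forall fun p => by simp only [margEqv_symm_fst])
  have hFi' := hFi
  rw [Measure.volume_eq_prod] at hFi'
  have hiter : ∀ y, (∫ z, f ((margEqv S).symm (y, z)) * g y) = marg f S y * g y := fun y => by
    rw [integral_mul_const, ← marg_eq]
  constructor
  · exact hFi'.integral_prod_left.congr (Filter.Eventually.of_forall fun y => hiter y)
  · calc ∫ y, marg f S y * g y
        = ∫ y, ∫ z, f ((margEqv S).symm (y, z)) * g y :=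
          integral_congr_ae (Filter.Eventually.of_forall fun y => (hiter y).symm)
      _ = ∫ p : ({j : Fin d // j ∈ S} → ℝ) × ({j : Fin d // j ∉ S} → ℝ),
            f ((margEqv S).symm p) * g p.1 ∂(volume.prod volume) := integral_integral hFi'
      _ = ∫ p : ({j : Fin d // j ∈ S} → ℝ) × ({j : Fin d // j ∉ S} → ℝ),
            f ((margEqv S).symm p) * g p.1 := by rw [← Measure.volume_eq_prod]
      _ = ∫ p : ({j : Fin d // j ∈ S} → ℝ) × ({j : Fin d // j ∉ S} → ℝ),
            f ((margEqv S).symm p) * g (fun j : {j : Fin d // j ∈ S} => (margEqv S).symm p j.1) :=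
          integral_congr_ae (Filter.Eventually.of_forall fun p => by simp only [margEqv_symm_fst])
      _ = ∫ x, f x * g (fun j => x j.1) := (margEqv_mp_symm S).integral_comp' (fun x => f x * g fun j => x j.1)

instance : IsEmpty {j : Fin d // j ∉ (Finset.univ : Finset (Fin d))} :=
  ⟨fun j => j.2 (Finset.mem_univ j.1)⟩

lemma vol_ae_neBot (ι : Type*) [Fintype ι] [MeasurableSpace ι] :
    (ae (volume : Measure (ι → ℝ))).NeBot := by
  refine ae_neBot.mpr fun h => ?_
  have := isOpen_univ.measure_pos (volume : Measure (ι → ℝ)) Set.univ_nonempty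
  simp [h] at this

lemma marg_univ (f : (Fin d → ℝ) → ℝ) (y : {j : Fin d // j ∈ (Finset.univ : Finset (Fin d))} → ℝ) :
    marg f Finset.univ y = f (fun j => y ⟨j, Finset.mem_univ j⟩) := by
  unfold marg
  have h1 : ∀ z : {j : Fin d // j ∉ (Finset.univ : Finset (Fin d))} → ℝ,
      (fun j => if h : j ∈ (Finset.univ : Finset (Fin d)) then y ⟨j, h⟩ else z ⟨j, h⟩)
        = fun j => y ⟨j, Finset.mem_univ j⟩ := by
    intro z; funext j; rw [dif_pos (Finset.mem_univ j)]
  simp_rw [h1]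
  rw [integral_const]
  have : (volume : Measure ({j : Fin d // j ∉ (Finset.univ : Finset (Fin d))} → ℝ)) Set.univ = 1 := by
    rw [volume_pi, Measure.pi_empty_univ]
  rw [measureReal_def, this]
  simp

end helpers

/-- Under MAR (the weights `w S` depend only on the observed coordinates, by construction)
and the positivity condition `P(M = fully observed | X = x) > 0` for `P_X`-a.e. `x`, the
true density `π` is the unique minimizer of `Q ↦ E_M[KL(P_{X|M}^{(M)} ‖ Q^{(M)})]` among
probability densities, and the `q`-dependent part is nonnegative, vanishing iff `q = π`. -/



theorem stmt_13 {d : ℕ} (𝓜 : Finset (Finset (Fin d)))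
    (huniv : Finset.univ ∈ 𝓜)
    (π : (Fin d → ℝ) → ℝ) (hπmeas : Measurable π) (hπpos : ∀ x, 0 < π x)
    (hπprob : ∫ x, π x = 1) (hπint : Integrable π)
    (w : (S : Finset (Fin d)) → ({j : Fin d // j ∈ S} → ℝ) → ℝ)
    (hwmeas : ∀ S, Measurable (w S))
    (hwnonneg : ∀ S y, 0 ≤ w S y)
    (hwsum : ∀ x : Fin d → ℝ, ∑ S ∈ 𝓜, w S (fun j => x j.1) = 1)
    (hwpos : ∀ᵐ x : Fin d → ℝ, 0 < w Finset.univ (fun j => x j.1))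
    (hπself : ∀ S ∈ 𝓜, Integrable (fun y : {j : Fin d // j ∈ S} → ℝ =>
      Real.log ((marg π S y * w S y / patternProb π w S) / marg π S y) *
        (marg π S y * w S y / patternProb π w S))) :
    ∀ q : (Fin d → ℝ) → ℝ, Measurable q → (∀ x, 0 < q x) →
      (∫ x, q x) = 1 → Integrable q →
      (∀ S ∈ 𝓜, Integrable (fun y : {j : Fin d // j ∈ S} → ℝ =>
        Real.log (marg π S y / marg q S y) * marg π S y * w S y)) →
      (∀ S ∈ 𝓜, Integrable (fun y : {j : Fin d // j ∈ S} → ℝ =>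
        Real.log ((marg π S y * w S y / patternProb π w S) / marg q S y) *
          (marg π S y * w S y / patternProb π w S))) →
      objective 𝓜 π w π ≤ objective 𝓜 π w q ∧
      (objective 𝓜 π w q = objective 𝓜 π w π → ∀ᵐ x : Fin d → ℝ, q x = π x) ∧
      0 ≤ qPart 𝓜 π w q ∧
      (qPart 𝓜 π w q = 0 ↔ ∀ᵐ x : Fin d → ℝ, q x = π x) := by
  intro q hqmeas hqpos hqprob hqint hqPint hqObjInt
  have hwle1 : ∀ S ∈ 𝓜, ∀ y, w S y ≤ 1 := by
    intro S hS y
    have hx : (fun j : {j : Fin d // j ∈ S} =>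
        if h : (j : Fin d) ∈ S then y ⟨j, h⟩ else 0) = y := by
      funext j
      simp [j.2]
    have h1 := hwsum (fun j' : Fin d => if h : j' ∈ S then y ⟨j', h⟩ else 0)
    have h2 : w S (fun j : {j : Fin d // j ∈ S} => if h : (j : Fin d) ∈ S then y ⟨j, h⟩ else 0)
        ≤ ∑ T ∈ 𝓜, w T (fun j : {j : Fin d // j ∈ T} =>
            if h : (j : Fin d) ∈ S then y ⟨j, h⟩ else 0) :=
      Finset.single_le_sum (f := fun T : Finset (Fin d) => w T (fun j : {j : Fin d // j ∈ T} =>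
        if h : (j : Fin d) ∈ S then y ⟨j, h⟩ else 0)) (fun T _ => hwnonneg T _) hS
    rw [hx] at h2
    calc w S y ≤ ∑ T ∈ 𝓜, w T (fun j : {j : Fin d // j ∈ T} =>
            if h : (j : Fin d) ∈ S then y ⟨j, h⟩ else 0) := h2
      _ = 1 := h1
  have hπnn : ∀ x, 0 ≤ π x := fun x => (hπpos x).le
  have hAw : ∀ S ∈ 𝓜, Integrable (fun y => marg π S y * w S y) ∧
      ∫ y, marg π S y * w S y = ∫ x, π x * w S (fun j => x j.1) :=
    fun S hS => marg_mul_w hπmeas hπpos hπint S (hwmeas S) (hwnonneg S) (hwle1 S hS)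
  have hBw : ∀ S ∈ 𝓜, Integrable (fun y => marg q S y * w S y) ∧
      ∫ y, marg q S y * w S y = ∫ x, q x * w S (fun j => x j.1) :=
    fun S hS => marg_mul_w hqmeas hqpos hqint S (hwmeas S) (hwnonneg S) (hwle1 S hS)
  have hApos : ∀ S : Finset (Fin d), ∀ᵐ y : {j : Fin d // j ∈ S} → ℝ, 0 < marg π S y :=
    fun S => marg_pos_ae hπpos hπint S
  have hBpos : ∀ S : Finset (Fin d), ∀ᵐ y : {j : Fin d // j ∈ S} → ℝ, 0 < marg q S y :=
    fun S => marg_pos_ae hqpos hqint S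
  have key : ∀ f : (Fin d → ℝ) → ℝ, Measurable f → (∀ x, 0 < f x) → Integrable f →
      (∫ x, f x) = 1 → ∑ S ∈ 𝓜, ∫ x, f x * w S (fun j => x j.1) = 1 := by
    intro f hm hp hi h1
    have hint : ∀ S ∈ 𝓜, Integrable fun x => f x * w S (fun j => x j.1) := by
      intro S hS
      refine hi.mono' ((hm.mul ((hwmeas S).comp
        (measurable_pi_lambda _ fun j => measurable_pi_apply _))).aestronglyMeasurable)
        (Filter.Eventually.of_forall fun x => ?_)
      rw [Real.norm_eq_abs, abs_of_nonneg (mul_nonneg (hp x).le (hwnonneg _ _))]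
      exact mul_le_of_le_one_right (hp x).le (hwle1 S hS _)
    calc ∑ S ∈ 𝓜, ∫ x, f x * w S (fun j => x j.1)
        = ∫ x, ∑ S ∈ 𝓜, f x * w S (fun j => x j.1) := (integral_finset_sum 𝓜 hint).symm
      _ = ∫ x, f x := integral_congr_ae (Filter.Eventually.of_forall fun x => by
            show (∑ S ∈ 𝓜, f x * w S fun j => x j.1) = f x
            rw [← Finset.mul_sum, hwsum x, mul_one])
      _ = 1 := h1
  have sumc : ∑ S ∈ 𝓜, ((∫ y, marg π S y * w S y) - ∫ y, marg q S y * w S y) = 0 := by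
    rw [Finset.sum_sub_distrib]
    have h1 : ∑ S ∈ 𝓜, ∫ y, marg π S y * w S y = 1 := by
      rw [Finset.sum_congr rfl fun S hS => (hAw S hS).2]
      exact key π hπmeas hπpos hπint hπprob
    have h2 : ∑ S ∈ 𝓜, ∫ y, marg q S y * w S y = 1 := by
      rw [Finset.sum_congr rfl fun S hS => (hBw S hS).2]
      exact key q hqmeas hqpos hqint hqprob
    rw [h1, h2, sub_self]
  have hnn : ∀ S : Finset (Fin d), ∀ᵐ y : {j : Fin d // j ∈ S} → ℝ,
      0 ≤ Real.log (marg π S y / marg q S y) * marg π S y * w S y -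
        (marg π S y * w S y - marg q S y * w S y) := by
    intro S
    filter_upwards [hApos S, hBpos S] with y hA hB
    have h1 : 1 - marg q S y / marg π S y ≤ Real.log (marg π S y / marg q S y) := by
      have h2 := Real.log_le_sub_one_of_pos (div_pos hB hA)
      rw [Real.log_div hB.ne' hA.ne'] at h2
      rw [Real.log_div hA.ne' hB.ne']
      linarith
    have h2 : (1 - marg q S y / marg π S y) * (marg π S y * w S y) ≤
        Real.log (marg π S y / marg q S y) * (marg π S y * w S y) :=
      mul_le_mul_of_nonneg_right h1 (mul_nonneg hA.le (hwnonneg S y))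
    have hBA : marg q S y / marg π S y * marg π S y = marg q S y :=
      div_mul_cancel₀ _ hA.ne'
    have h3 : (1 - marg q S y / marg π S y) * (marg π S y * w S y)
        = marg π S y * w S y - marg q S y * w S y := by
      rw [sub_mul, one_mul, ← mul_assoc, hBA]
    nlinarith [h2, h3]
  have hABi : ∀ S : Finset (Fin d), Integrable (fun y : {j : Fin d // j ∈ S} → ℝ =>
      marg π S y * w S y - marg q S y * w S y) → True := fun _ _ => trivial
  have hql : ∀ S ∈ 𝓜, ((∫ y, marg π S y * w S y) - ∫ y, marg q S y * w S y) ≤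
      ∫ y, Real.log (marg π S y / marg q S y) * marg π S y * w S y := by
    intro S hS
    have h0 := integral_nonneg_of_ae (hnn S)
    have hAB : Integrable (fun y : {j : Fin d // j ∈ S} → ℝ =>
        marg π S y * w S y - marg q S y * w S y) := (hAw S hS).1.sub (hBw S hS).1
    rw [integral_sub (hqPint S hS) hAB,
      integral_sub (hAw S hS).1 (hBw S hS).1] at h0
    linarith
  have hqpart_nonneg : 0 ≤ qPart 𝓜 π w q := by
    have h1 : (0:ℝ) = ∑ S ∈ 𝓜, ((∫ y, marg π S y * w S y) - ∫ y, marg q S y * w S y) := sumc.symm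
    have h2 := Finset.sum_le_sum hql
    unfold qPart
    linarith
  have hobj : ∀ S ∈ 𝓜,
      patternProb π w S * (∫ y : {j : Fin d // j ∈ S} → ℝ,
          Real.log ((marg π S y * w S y / patternProb π w S) / marg q S y) *
          (marg π S y * w S y / patternProb π w S)) -
        patternProb π w S * (∫ y : {j : Fin d // j ∈ S} → ℝ,
          Real.log ((marg π S y * w S y / patternProb π w S) / marg π S y) *
          (marg π S y * w S y / patternProb π w S)) =
      ∫ y, Real.log (marg π S y / marg q S y) * marg π S y * w S y := by
    intro S hS
    have hP0 : 0 ≤ patternProb π w S :=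
      integral_nonneg fun y => mul_nonneg (marg_nonneg hπnn S y) (hwnonneg S y)
    rcases hP0.eq_or_lt with hP | hP
    · have hAw0 : (fun y : {j : Fin d // j ∈ S} → ℝ => marg π S y * w S y) =ᵐ[volume] 0 :=
        (integral_eq_zero_iff_of_nonneg
          (fun y => mul_nonneg (marg_nonneg hπnn S y) (hwnonneg S y)) (hAw S hS).1).mp hP.symm
      have hz : ∫ y, Real.log (marg π S y / marg q S y) * marg π S y * w S y = 0 := by
        rw [show (0:ℝ) = ∫ (_ : {j : Fin d // j ∈ S} → ℝ), (0:ℝ) from (integral_zero _ _).symm]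
        refine integral_congr_ae ?_
        filter_upwards [hAw0] with y hy
        simp only [Pi.zero_apply] at hy
        rw [mul_assoc, hy, mul_zero]
      rw [hz, ← hP, zero_mul, zero_mul, sub_zero]
    · have hPne : patternProb π w S ≠ 0 := hP.ne'
      have hae2 : (fun y : {j : Fin d // j ∈ S} → ℝ =>
            Real.log ((marg π S y * w S y / patternProb π w S) / marg q S y) *
              (marg π S y * w S y / patternProb π w S) -
            Real.log ((marg π S y * w S y / patternProb π w S) / marg π S y) *
              (marg π S y * w S y / patternProb π w S)) =ᵐ[volume]
          (fun y : {j : Fin d // j ∈ S} → ℝ =>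
            Real.log (marg π S y / marg q S y) * marg π S y * w S y / patternProb π w S) := by
        filter_upwards [hApos S, hBpos S] with y hA hB
        by_cases hω : w S y = 0
        · simp [hω]
        · have hωpos : 0 < w S y := lt_of_le_of_ne (hwnonneg S y) (Ne.symm hω)
          have ht : 0 < marg π S y * w S y / patternProb π w S :=
            div_pos (mul_pos hA hωpos) hP
          rw [Real.log_div ht.ne' hB.ne', Real.log_div ht.ne' hA.ne',
            Real.log_div hA.ne' hB.ne']
          ring
      rw [← mul_sub, ← integral_sub (hqObjInt S hS) (hπself S hS), integral_congr_ae hae2,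
        integral_div, mul_div_cancel₀ _ hPne]
  have hdiff : objective 𝓜 π w q - objective 𝓜 π w π = qPart 𝓜 π w q := by
    unfold objective qPart
    rw [← Finset.sum_sub_distrib]
    exact Finset.sum_congr rfl fun S hS => hobj S hS
  have hforward : qPart 𝓜 π w q = 0 → ∀ᵐ x : Fin d → ℝ, q x = π x := by
    intro hq0
    have hsum0 : ∑ S ∈ 𝓜, ((∫ y, Real.log (marg π S y / marg q S y) * marg π S y * w S y) -
        ((∫ y, marg π S y * w S y) - ∫ y, marg q S y * w S y)) = 0 := by
      rw [Finset.sum_sub_distrib, sumc, sub_zero]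
      exact hq0
    have hterm := (Finset.sum_eq_zero_iff_of_nonneg
      (fun S hS => sub_nonneg.mpr (hql S hS))).mp hsum0 Finset.univ huniv
    have hint0 : Integrable (fun y : {j : Fin d // j ∈ (Finset.univ : Finset (Fin d))} → ℝ =>
        Real.log (marg π Finset.univ y / marg q Finset.univ y) * marg π Finset.univ y *
          w Finset.univ y -
          (marg π Finset.univ y * w Finset.univ y - marg q Finset.univ y * w Finset.univ y)) := by
      have hAB : Integrable (fun y : {j : Fin d // j ∈ (Finset.univ : Finset (Fin d))} → ℝ =>
          marg π Finset.univ y * w Finset.univ y - marg q Finset.univ y * w Finset.univ y) :=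
        (hAw Finset.univ huniv).1.sub (hBw Finset.univ huniv).1
      exact (hqPint Finset.univ huniv).sub hAB
    have hIzero : ∫ y : {j : Fin d // j ∈ (Finset.univ : Finset (Fin d))} → ℝ,
        (Real.log (marg π Finset.univ y / marg q Finset.univ y) * marg π Finset.univ y *
          w Finset.univ y -
          (marg π Finset.univ y * w Finset.univ y - marg q Finset.univ y * w Finset.univ y))
          = 0 := by
      have hAB : Integrable (fun y : {j : Fin d // j ∈ (Finset.univ : Finset (Fin d))} → ℝ =>
          marg π Finset.univ y * w Finset.univ y - marg q Finset.univ y * w Finset.univ y) :=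
        (hAw Finset.univ huniv).1.sub (hBw Finset.univ huniv).1
      rw [integral_sub (hqPint Finset.univ huniv) hAB,
        integral_sub (hAw Finset.univ huniv).1 (hBw Finset.univ huniv).1]
      exact hterm
    have hzero := (integral_eq_zero_iff_of_nonneg_ae (hnn Finset.univ) hint0).mp hIzero
    have hwy : ∀ᵐ y : {j : Fin d // j ∈ (Finset.univ : Finset (Fin d))} → ℝ,
        0 < w Finset.univ y := by
      have h1 := (margEqv_mp_symm (Finset.univ : Finset (Fin d))).quasiMeasurePreserving.ae hwpos
      have h2 : ∀ᵐ p : ({j : Fin d // j ∈ (Finset.univ : Finset (Fin d))} → ℝ) ×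
          ({j : Fin d // j ∉ (Finset.univ : Finset (Fin d))} → ℝ),
          0 < w Finset.univ p.1 := by
        filter_upwards [h1] with p hp
        rwa [margEqv_symm_fst] at hp
      rw [Measure.volume_eq_prod] at h2
      have h3 := Measure.ae_ae_of_ae_prod h2
      haveI : (ae (volume :
          Measure ({j : Fin d // j ∉ (Finset.univ : Finset (Fin d))} → ℝ))).NeBot :=
        vol_ae_neBot _
      filter_upwards [h3] with y hy
      exact hy.exists.choose_spec
    have hmain : ∀ᵐ y : {j : Fin d // j ∈ (Finset.univ : Finset (Fin d))} → ℝ,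
        q (fun j => y ⟨j, Finset.mem_univ j⟩) = π (fun j => y ⟨j, Finset.mem_univ j⟩) := by
      filter_upwards [hzero, hApos Finset.univ, hBpos Finset.univ, hwy] with y h0 hA hB hω
      simp only [Pi.zero_apply] at h0
      have heq : Real.log (marg π Finset.univ y / marg q Finset.univ y) * marg π Finset.univ y
          = marg π Finset.univ y - marg q Finset.univ y := by
        have h4 : Real.log (marg π Finset.univ y / marg q Finset.univ y) *
            marg π Finset.univ y * w Finset.univ y
            = (marg π Finset.univ y - marg q Finset.univ y) * w Finset.univ y := by
          rw [sub_mul]; linarith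
        exact mul_right_cancel₀ hω.ne' h4
      have hba : marg q Finset.univ y = marg π Finset.univ y := by
        by_contra hne
        have hne' : marg q Finset.univ y / marg π Finset.univ y ≠ 1 :=
          fun h => hne ((div_eq_one_iff_eq hA.ne').mp h)
        have hlt := Real.log_lt_sub_one_of_pos (div_pos hB hA) hne'
        rw [Real.log_div hB.ne' hA.ne'] at hlt
        have h5 := mul_lt_mul_of_pos_right hlt hA
        rw [sub_mul, sub_mul, div_mul_cancel₀ _ hA.ne', one_mul] at h5
        rw [Real.log_div hA.ne' hB.ne', sub_mul] at heq
        linarith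
      rw [← marg_univ q y, ← marg_univ π y, hba]
    have hprod := (Measure.quasiMeasurePreserving_fst
      (μ := (volume : Measure ({j : Fin d // j ∈ (Finset.univ : Finset (Fin d))} → ℝ)))
      (ν := (volume : Measure ({j : Fin d // j ∉ (Finset.univ : Finset (Fin d))} → ℝ)))).ae hmain
    rw [← Measure.volume_eq_prod] at hprod
    exact (margEqv_mp (Finset.univ : Finset (Fin d))).quasiMeasurePreserving.ae hprod
  have hreverse : (∀ᵐ x : Fin d → ℝ, q x = π x) → qPart 𝓜 π w q = 0 := by
    intro hae
    unfold qPart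
    refine Finset.sum_eq_zero fun S hS => ?_
    have h1 := (margEqv_mp_symm S).quasiMeasurePreserving.ae hae
    rw [Measure.volume_eq_prod] at h1
    have h2 := Measure.ae_ae_of_ae_prod h1
    have h3 : ∀ᵐ y : {j : Fin d // j ∈ S} → ℝ, marg q S y = marg π S y := by
      filter_upwards [h2] with y hy
      rw [marg_eq, marg_eq]
      exact integral_congr_ae hy
    rw [show (0:ℝ) = ∫ (_ : {j : Fin d // j ∈ S} → ℝ), (0:ℝ) from (integral_zero _ _).symm]
    refine integral_congr_ae ?_
    filter_upwards [h3] with y hy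
    rw [hy]
    rcases eq_or_ne (marg π S y) 0 with h | h
    · simp [h]
    · rw [div_self h, Real.log_one, zero_mul, zero_mul]
  refine ⟨?_, ?_, hqpart_nonneg, hforward, hreverse⟩
  · linarith [hdiff, hqpart_nonneg]
  · intro h
    apply hforward
    rw [← hdiff, h, sub_self]
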